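/- Let γ(τ) = (e^{-τ}, x(τ)) be a causal curve in the Kasner spacetime with metric g = -e^{-2τ}dτ⊗dτ + Σᵢ e^{-2p_iτ} dxⁱ⊗dxⁱ, where each p_i < 1. Then |ẋⁱ(τ)| ≤ e^{-(1-p_i)τ} for all τ, and consequently for τ_j ≤ τ_k, |xⁱ(τ_k) - xⁱ(τ_j)| ≤ (1/(1-p_i)) e^{-(1-p_i)τ_j}. In particular, x(τ) converges to a limit point in T³ as τ → ∞. -/

import Mathlib

open Real Filter

theorem causal_curve_spatial_convergence (p : Fin 3 → ℝ) (hp : ∀ i, p i < 1)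
    (x x' : ℝ → Fin 3 → ℝ)
    (hx : ∀ τ : ℝ, ∀ i, HasDerivAt (fun s => x s i) (x' τ i) τ)
    (hcausal : ∀ τ : ℝ,
      -Real.exp (-2 * τ) + ∑ i, Real.exp (-2 * p i * τ) * (x' τ i) ^ 2 ≤ 0) :
    (∀ τ : ℝ, ∀ i, |x' τ i| ≤ Real.exp (-(1 - p i) * τ)) ∧
    (∀ i, ∀ τj τk : ℝ, τj ≤ τk →
      |x τk i - x τj i| ≤ (1 / (1 - p i)) * Real.exp (-(1 - p i) * τj)) ∧
    (∃ q : Fin 3 → AddCircle (2 * Real.pi),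
      Tendsto (fun τ => fun i => ((x τ i : ℝ) : AddCircle (2 * Real.pi))) atTop (nhds q)) := by
  have key : ∀ τ : ℝ, ∀ i, |x' τ i| ≤ Real.exp (-(1 - p i) * τ) := by
    intro τ i
    have hsum := hcausal τ
    have hterm : Real.exp (-2 * p i * τ) * (x' τ i) ^ 2 ≤ Real.exp (-2 * τ) := by
      have h1 : Real.exp (-2 * p i * τ) * (x' τ i) ^ 2 ≤
          ∑ j, Real.exp (-2 * p j * τ) * (x' τ j) ^ 2 :=
        Finset.single_le_sum (f := fun j => Real.exp (-2 * p j * τ) * (x' τ j) ^ 2)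
          (fun j _ => by positivity) (Finset.mem_univ i)
      linarith
    have e1 : Real.exp (2 * p i * τ) * Real.exp (-2 * p i * τ) = 1 := by
      rw [← Real.exp_add]; ring_nf; exact Real.exp_zero
    have h3 : Real.exp (2 * p i * τ) * Real.exp (-2 * τ)
        = Real.exp (-(1 - p i) * τ) ^ 2 := by
      rw [sq, ← Real.exp_add, ← Real.exp_add]; ring_nf
    have h2 : (x' τ i) ^ 2 ≤ Real.exp (-(1 - p i) * τ) ^ 2 := by
      have hpos := Real.exp_pos (2 * p i * τ)
      nlinarith [mul_le_mul_of_nonneg_left hterm hpos.le]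
    calc |x' τ i| = Real.sqrt ((x' τ i) ^ 2) := (Real.sqrt_sq_eq_abs _).symm
      _ ≤ Real.sqrt (Real.exp (-(1 - p i) * τ) ^ 2) := Real.sqrt_le_sqrt h2
      _ = Real.exp (-(1 - p i) * τ) := Real.sqrt_sq (Real.exp_pos _).le
  have part2 : ∀ i, ∀ τj τk : ℝ, τj ≤ τk →
      |x τk i - x τj i| ≤ (1 / (1 - p i)) * Real.exp (-(1 - p i) * τj) := by
    intro i τj τk hjk
    set a : ℝ := 1 - p i with ha_def
    have ha : 0 < a := by simp [ha_def]; linarith [hp i]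
    have hE : ∀ τ : ℝ, HasDerivAt (fun s : ℝ => (1 / a) * Real.exp (-a * s))
        (-Real.exp (-a * τ)) τ := by
      intro τ
      have h := (((hasDerivAt_id τ).const_mul (-a)).exp).const_mul (1 / a)
      refine h.congr_deriv ?_
      simp only [id, mul_one]
      rw [mul_comm (Real.exp _) (-a), ← mul_assoc, one_div, mul_neg, inv_mul_cancel₀ ha.ne', neg_one_mul]
    have hF : Antitone (fun s : ℝ => x s i + (1 / a) * Real.exp (-a * s)) := by
      have hd : ∀ s : ℝ, HasDerivAt (fun s : ℝ => x s i + (1 / a) * Real.exp (-a * s))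
          (x' s i + -Real.exp (-a * s)) s := fun s => (hx s i).add (hE s)
      apply antitone_of_deriv_nonpos
      · exact fun s => (hd s).differentiableAt
      · intro s
        rw [(hd s).deriv]
        have := key s i
        have := (abs_le.mp this).2
        simp only [← ha_def] at this
        linarith
    have hG : Monotone (fun s : ℝ => x s i - (1 / a) * Real.exp (-a * s)) := by
      have hd : ∀ s : ℝ, HasDerivAt (fun s : ℝ => x s i - (1 / a) * Real.exp (-a * s))
          (x' s i - -Real.exp (-a * s)) s := fun s => (hx s i).sub (hE s)
      apply monotone_of_deriv_nonneg
      · exact fun s => (hd s).differentiableAt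
      · intro s
        rw [(hd s).deriv]
        have := key s i
        have := (abs_le.mp this).1
        simp only [← ha_def] at this
        linarith
    have h1 := hF hjk
    have h2 := hG hjk
    simp only at h1 h2
    have hek : 0 < (1 / a) * Real.exp (-a * τk) := by positivity
    rw [abs_le]
    constructor <;> [skip; skip] <;> simp only [ha_def] at * <;>
      [linarith; linarith]
  refine ⟨key, part2, ?_⟩
  have hconv : ∀ i, ∃ L : ℝ, Tendsto (fun τ => x τ i) atTop (nhds L) := by
    intro i
    have ha : 0 < 1 - p i := by linarith [hp i]
    rw [← cauchy_map_iff_exists_tendsto]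
    rw [Metric.cauchy_iff]
    refine ⟨map_neBot, ?_⟩
    intro ε hε
    have hlim : Tendsto (fun T : ℝ => (1 / (1 - p i)) * Real.exp (-(1 - p i) * T))
        atTop (nhds 0) := by
      have : Tendsto (fun T : ℝ => -(1 - p i) * T) atTop atBot :=
        Tendsto.const_mul_atTop_of_neg (neg_neg_of_pos ha) tendsto_id
      simpa using (Real.tendsto_exp_atBot.comp this).const_mul (1 / (1 - p i))
    obtain ⟨T, hT⟩ := ((hlim.eventually (gt_mem_nhds hε)).and (eventually_ge_atTop 0)).exists
    refine ⟨(fun τ => x τ i) '' Set.Ici T, image_mem_map (Ici_mem_atTop T), ?_⟩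
    rintro u ⟨s, hs, rfl⟩ v ⟨t, ht, rfl⟩
    have hdec : ∀ r : ℝ, T ≤ r → (1 / (1 - p i)) * Real.exp (-(1 - p i) * r)
        ≤ (1 / (1 - p i)) * Real.exp (-(1 - p i) * T) := by
      intro r hr
      have : -(1 - p i) * r ≤ -(1 - p i) * T := by nlinarith
      have := Real.exp_le_exp.mpr this
      have h1a : (0:ℝ) < 1 / (1 - p i) := by positivity
      nlinarith
    rcases le_total s t with hst | hst
    · have := part2 i s t hst
      calc dist (x s i) (x t i) = |x t i - x s i| := by rw [dist_comm, Real.dist_eq]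
        _ ≤ (1 / (1 - p i)) * Real.exp (-(1 - p i) * s) := this
        _ ≤ (1 / (1 - p i)) * Real.exp (-(1 - p i) * T) := hdec s hs
        _ < ε := hT.1
    · have := part2 i t s hst
      calc dist (x s i) (x t i) = |x s i - x t i| := Real.dist_eq _ _
        _ ≤ (1 / (1 - p i)) * Real.exp (-(1 - p i) * t) := this
        _ ≤ (1 / (1 - p i)) * Real.exp (-(1 - p i) * T) := hdec t ht
        _ < ε := hT.1
  choose L hL using hconv
  refine ⟨fun i => ((L i : ℝ) : AddCircle (2 * Real.pi)), ?_⟩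
  rw [tendsto_pi_nhds]
  intro i
  exact (continuous_quotient_mk'.tendsto (L i)).comp (hL i)
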